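/- Let m be a positive integer and let k, d be integers with 0 ≤ k ≤ m/2 and 0 < d ≤ m. Then (3^k+1)·3^d ≡ 3^k+1 (mod 3^m - 1) if and only if d = m, or (m is even and d = k = m/2). -/
import Mathlib

theorem stmt_0 (m k d : ℕ) (hm : 0 < m) (hk : k ≤ m / 2) (hd0 : 0 < d) (hdm : d ≤ m) :
    (3 ^ k + 1) * 3 ^ d ≡ 3 ^ k + 1 [MOD 3 ^ m - 1] ↔
      d = m ∨ (Even m ∧ d = m / 2 ∧ k = m / 2) := by
  have h1 : (1:ℕ) ≤ 3 ^ m := Nat.one_le_pow _ _ (by norm_num)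
  have key : ((3 ^ k + 1) * 3 ^ d ≡ 3 ^ k + 1 [MOD 3 ^ m - 1]) ↔
      ((3:ℤ) ^ m - 1) ∣ (3 ^ k + 1) * (3 ^ d - 1) := by
    rw [Nat.modEq_iff_dvd]
    push_cast [h1]
    rw [show ((3:ℤ)^k + 1) - (3^k+1)*3^d = -((3^k+1)*(3^d-1)) by ring, dvd_neg]
  rw [key]
  constructor
  · intro h
    by_cases hdm' : d = m
    · exact Or.inl hdm'
    have hdlt : d < m := lt_of_le_of_ne hdm hdm'
    -- first show m ≤ k + d
    have hkd : m ≤ k + d := by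
      by_contra hc
      push_neg at hc
      have hA0 : (0:ℤ) < (3 ^ k + 1) * (3 ^ d - 1) := by
        have : (1:ℤ) < 3 ^ d := by
          calc (1:ℤ) < 3 ^ 1 := by norm_num
          _ ≤ 3 ^ d := pow_le_pow_right₀ (by norm_num) hd0
        nlinarith [pow_pos (show (0:ℤ) < 3 by norm_num) k]
      have hAlt : (3 ^ k + 1) * (3 ^ d - 1) < (3:ℤ) ^ m - 1 := by
        have e1 : (3:ℤ) ^ (k + d) ≤ 3 ^ (m - 1) :=
          pow_le_pow_right₀ (by norm_num) (by omega)
        have e2 : (3:ℤ) ^ d ≤ 3 ^ (m - 1) :=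
          pow_le_pow_right₀ (by norm_num) (by omega)
        have e3 : (0:ℤ) < 3 ^ k := by positivity
        have e4 : (3:ℤ) ^ m = 3 * 3 ^ (m - 1) := by
          rw [← pow_succ']
          congr 1
          omega
        have expand : ((3:ℤ) ^ k + 1) * (3 ^ d - 1) = 3 ^ (k + d) + 3 ^ d - 3 ^ k - 1 := by
          rw [pow_add]; ring
        rw [expand, e4]
        nlinarith
      have := Int.le_of_dvd hA0 h
      omega
    set t := k + d - m with ht
    have htk : t < k := by omega
    have hB : ((3:ℤ) ^ m - 1) ∣ (3 ^ t + 3 ^ d - 3 ^ k - 1) := by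
      have e : (3:ℤ) ^ t + 3 ^ d - 3 ^ k - 1
          = (3 ^ k + 1) * (3 ^ d - 1) - 3 ^ t * (3 ^ m - 1) := by
        have : (3:ℤ) ^ t * 3 ^ m = 3 ^ (k + d) := by
          rw [← pow_add]; congr 1; omega
        have e2 : (3:ℤ)^(k+d) = 3^k * 3^d := by rw [pow_add]
        nlinarith [this]
      rw [e]
      exact dvd_sub h (Dvd.intro_left _ rfl)
    have hB0 : (3:ℤ) ^ t + 3 ^ d - 3 ^ k - 1 = 0 := by
      refine Int.eq_zero_of_abs_lt_dvd hB ?_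
      have e1 : (3:ℤ) ^ t ≤ 3 ^ (m - 1) := pow_le_pow_right₀ (by norm_num) (by omega)
      have e2 : (3:ℤ) ^ d ≤ 3 ^ (m - 1) := pow_le_pow_right₀ (by norm_num) (by omega)
      have e3 : (3:ℤ) ^ k ≤ 3 ^ m := pow_le_pow_right₀ (by norm_num) (by omega)
      have e4 : (3:ℤ) ^ m = 3 * 3 ^ (m - 1) := by
        rw [← pow_succ']; congr 1; omega
      have e5 : (0:ℤ) < 3 ^ k := by positivity
      have e6 : (3:ℤ) ^ 0 ≤ 3 ^ t := pow_le_pow_right₀ (by norm_num) (Nat.zero_le t)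
      have e7 : (3:ℤ) ^ 1 ≤ 3 ^ d := pow_le_pow_right₀ (by norm_num) hd0
      rw [abs_lt]
      norm_num at e6 e7
      constructor <;> nlinarith
    -- now 3^t + 3^d = 3^k + 1
    have ht0 : t = 0 := by
      by_contra htne
      have h3t : (3:ℤ) ∣ 3 ^ t := dvd_pow_self 3 htne
      have h3d : (3:ℤ) ∣ 3 ^ d := dvd_pow_self 3 (by omega)
      have h3k : (3:ℤ) ∣ 3 ^ k := dvd_pow_self 3 (by omega)
      have : (3:ℤ) ∣ 1 := by
        have : (1:ℤ) = 3 ^ t + 3 ^ d - 3 ^ k := by linarith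
        rw [this]
        exact dvd_sub (dvd_add h3t h3d) h3k
      norm_num at this
    rw [ht0] at hB0
    simp at hB0
    have hdk : d = k := by
      have h' : (3:ℤ) ^ d = 3 ^ k := by linarith
      have h'' : (3:ℕ) ^ d = 3 ^ k := by exact_mod_cast h'
      exact Nat.pow_right_injective (by norm_num) h''
    right
    have hm2 : m = k + k := by omega
    refine ⟨⟨k, by omega⟩, by omega, by omega⟩
  · rintro (rfl | ⟨⟨c, hc⟩, rfl, rfl⟩)
    · exact ⟨3 ^ k + 1, by ring⟩
    · have hmc : m / 2 = c := by omega
      rw [hmc]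
      have : (3:ℤ) ^ m = 3 ^ c * 3 ^ c := by
        rw [hc, pow_add]
      rw [this]
      exact ⟨1, by ring⟩
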